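/- arXiv:1807.04473 — 4 statements merged into one kernel-verified Lean document; each statement's English description precedes it below -/
import Mathlib

section
/- With K = I_M + Σ_{n=1}^L p_n R_n where each R_n is Hermitian PSD and p_n ≥ 0, the matrix R_m − p_m · R_m K⁻¹ R_m is Hermitian positive semidefinite for every m. -/
open Matrix Finset
open scoped ComplexOrder

lemma aux_smul_psd {n : Type*} [Fintype n] {A : Matrix n n ℂ} (hA : A.PosSemidef)
    {c : ℝ} (hc : 0 ≤ c) : (c • A).PosSemidef := by
  refine ⟨?_, fun x => ?_⟩
  · unfold Matrix.IsHermitian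
    rw [conjTranspose_smul, hA.1.eq]
    norm_num
  · exact (hA.smul hc).2 x

lemma aux_key {n : Type*} [Fintype n] [DecidableEq n] {K S : Matrix n n ℂ}
    (hK : K.PosDef) (hS : S.PosSemidef) (hKS : (K - S).PosSemidef) :
    (S - S * K⁻¹ * S).PosSemidef := by
  have hKu : IsUnit K.det := (Matrix.isUnit_iff_isUnit_det K).mp hK.isUnit
  have hKi : K⁻¹.PosDef := hK.inv
  obtain ⟨C, hC, hCC⟩ : ∃ C : Matrix n n ℂ, C.PosSemidef ∧ C * C = K⁻¹ :=
    ⟨_, (by open scoped MatrixOrder in exact (CFC.sqrt_nonneg K⁻¹).posSemidef),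
      (by open scoped MatrixOrder in exact CFC.sqrt_mul_sqrt_self K⁻¹ hKi.posSemidef.nonneg)⟩
  have hCH : Cᴴ = C := hC.isHermitian
  have h1 : C * (C * K) = 1 := by
    rw [← Matrix.mul_assoc, hCC, Matrix.nonsing_inv_mul K hKu]
  have h2 : (C * K) * C = 1 := mul_eq_one_comm.mp h1
  have hCKC : C * K * C = 1 := h2
  set T := C * S * C with hT
  have hTpsd : T.PosSemidef := by
    have := hS.conjTranspose_mul_mul_same C
    rwa [hCH] at this
  have h1T : (1 - T).PosSemidef := by
    have h := hKS.conjTranspose_mul_mul_same C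
    have e : Cᴴ * (K - S) * C = 1 - T := by
      rw [hCH, Matrix.mul_sub, Matrix.sub_mul, hCKC, hT]
    rwa [e] at h
  obtain ⟨Q, hQ, hQQ⟩ : ∃ Q : Matrix n n ℂ, Q.PosSemidef ∧ Q * Q = T :=
    ⟨_, (by open scoped MatrixOrder in exact (CFC.sqrt_nonneg T).posSemidef),
      (by open scoped MatrixOrder in exact CFC.sqrt_mul_sqrt_self T hTpsd.nonneg)⟩
  have hQH : Qᴴ = Q := hQ.isHermitian
  have hTT : (T - T * T).PosSemidef := by
    have h := h1T.conjTranspose_mul_mul_same Q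
    have e : Qᴴ * (1 - T) * Q = T - T * T := by
      rw [hQH, Matrix.mul_sub, Matrix.mul_one, Matrix.sub_mul, hQQ]
      congr 1
      rw [← hQQ]
      simp only [Matrix.mul_assoc]
    rwa [e] at h
  set D := C * K with hDdef
  have hDH : Dᴴ = K * C := by
    rw [hDdef, conjTranspose_mul, hCH, hK.isHermitian.eq]
  have hKCC : K * (C * C) = 1 := by rw [hCC, Matrix.mul_nonsing_inv K hKu]
  have hCCK : (C * C) * K = 1 := by rw [hCC, Matrix.nonsing_inv_mul K hKu]
  have h := hTT.conjTranspose_mul_mul_same D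
  have e : Dᴴ * (T - T * T) * D = S - S * K⁻¹ * S := by
    rw [hDH, Matrix.mul_sub, Matrix.sub_mul]
    congr 1
    · -- K * C * T * (C * K) = S
      calc (K * C) * T * (C * K)
          = K * (C * C) * S * ((C * C) * K) := by
            rw [hT]; simp only [Matrix.mul_assoc]
        _ = S := by rw [hKCC, hCCK, Matrix.one_mul, Matrix.mul_one]
    · calc (K * C) * (T * T) * (C * K)
          = K * (C * C) * S * (C * C) * (S * ((C * C) * K)) := by
            rw [hT]; simp only [Matrix.mul_assoc]
        _ = S * K⁻¹ * S := by
            rw [hKCC, hCCK, Matrix.one_mul, Matrix.mul_one, hCC, Matrix.mul_assoc]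
  rwa [e] at h

/-- with `K = I + ∑ p n • R n` (each `R n` Hermitian PSD, `p n ≥ 0`),
the MMSE error covariance `R m - p m • R m K⁻¹ R m` is Hermitian PSD for every `m`. -/
theorem stmt_1 (M L : ℕ) (hM : 0 < M) (hL : 0 < L)
    (R : Fin L → Matrix (Fin M) (Fin M) ℂ)
    (hR : ∀ n, (R n).PosSemidef)
    (p : Fin L → ℝ) (hp : ∀ n, 0 ≤ p n)
    (K : Matrix (Fin M) (Fin M) ℂ)
    (hK : K = 1 + ∑ n : Fin L, p n • R n) :
    ∀ m : Fin L, (R m - p m • (R m * K⁻¹ * R m)).PosSemidef := by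
  intro m
  have hsum : ∀ (s : Finset (Fin L)), (∑ n ∈ s, p n • R n).PosSemidef := by
    intro s
    induction s using Finset.induction_on with
    | empty => simpa using Matrix.PosSemidef.zero
    | insert _ _ hx ih =>
      rw [Finset.sum_insert hx]
      exact (aux_smul_psd (hR _) (hp _)).add ih
  have hKpd : K.PosDef := by
    rw [hK]
    exact Matrix.PosDef.add_posSemidef Matrix.PosDef.one (hsum _)
  rcases eq_or_lt_of_le (hp m) with h0 | hpos
  · have : p m • (R m * K⁻¹ * R m) = 0 := by rw [← h0]; simp
    rw [this, sub_zero]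
    exact hR m
  · set S := p m • R m with hS
    have hSpsd : S.PosSemidef := aux_smul_psd (hR m) (hp m)
    have hKS : (K - S).PosSemidef := by
      have : K - S = 1 + ∑ n ∈ Finset.univ.erase m, p n • R n := by
        rw [hK, ← Finset.sum_erase_add Finset.univ _ (Finset.mem_univ m), hS]
        abel
      rw [this]
      exact Matrix.PosSemidef.one.add (hsum _)
    have hkey := aux_key hKpd hSpsd hKS
    have e : R m - p m • (R m * K⁻¹ * R m) = (p m)⁻¹ • (S - S * K⁻¹ * S) := by
      rw [hS, smul_sub]
      congr 1
      · rw [smul_smul, inv_mul_cancel₀ hpos.ne', one_smul]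
      · rw [Matrix.smul_mul, Matrix.mul_smul, Matrix.smul_mul, smul_smul, smul_smul,
          inv_mul_cancel₀ hpos.ne', one_mul]
    rw [e]
    exact aux_smul_psd hkey (inv_nonneg.mpr (hp m))
end

section
/- Define the interference function I_{kl}(q) = γ · q_{kl} / SINR_{kl}(q) where SINR_{kl}(q) = c_{kl}^H (Σ_{n≠l} q_{kn} p_{kn} c_{kn} c_{kn}^H + D_k)⁻¹ c_{kl} · p_{kl} q_{kl}. Then I_{kl}(q) = γ / (p_{kl} · c_{kl}^H (Σ_{n≠l} q_{kn} p_{kn} c_{kn} c_{kn}^H + D_k)⁻¹ c_{kl}) is a standard interference function: it is positive, monotone (q ≤ q' componentwise implies I(q) ≤ I(q')), and scalable (for α > 1, α I(q) > I(α q) componentwise). -/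
open Matrix Finset
open scoped ComplexOrder

set_option linter.unusedSectionVars false

section Aux

variable {m : Type*} [Fintype m] [DecidableEq m]

lemma aux_star_dot (u w : m → ℂ) : star w ⬝ᵥ u = star (star u ⬝ᵥ w) := by
  rw [star_dotProduct]

lemma aux_star_dot_re (u w : m → ℂ) : (star u ⬝ᵥ w).re = (star w ⬝ᵥ u).re := by
  rw [aux_star_dot u w, Complex.star_def, Complex.conj_re]

lemma aux_quad_vecMulVec (v x : m → ℂ) :
    star x ⬝ᵥ (vecMulVec v (star v) *ᵥ x) = star (star v ⬝ᵥ x) * (star v ⬝ᵥ x) := by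
  have h : vecMulVec v (star v) *ᵥ x = (star v ⬝ᵥ x) • v := by
    funext i
    simp [mulVec, vecMulVec_apply, dotProduct, Finset.mul_sum, mul_comm, mul_left_comm]
  rw [h, dotProduct_smul, ← aux_star_dot, smul_eq_mul]
  ring

lemma aux_psd_term (r : ℝ) (hr : 0 ≤ r) (v : m → ℂ) :
    (r • vecMulVec v (star v)).PosSemidef := by
  rw [posSemidef_iff_dotProduct_mulVec]
  constructor
  · unfold Matrix.IsHermitian
    ext i j
    simp [conjTranspose_apply, vecMulVec_apply, mul_comm, Complex.real_smul]
  · intro x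
    rw [smul_mulVec, dotProduct_smul, aux_quad_vecMulVec]
    exact smul_nonneg (by exact_mod_cast hr) (star_mul_self_nonneg _)

lemma aux_mul_inv_cancel {M : Matrix m m ℂ} (hM : M.PosDef) (cv : m → ℂ) :
    M *ᵥ (M⁻¹ *ᵥ cv) = cv := by
  rw [mulVec_mulVec, Matrix.mul_nonsing_inv _ ((Matrix.isUnit_iff_isUnit_det _).mp hM.isUnit),
    one_mulVec]

lemma aux_inv_dot {M : Matrix m m ℂ} (hM : M.PosDef) (cv x : m → ℂ) :
    star (M⁻¹ *ᵥ cv) ⬝ᵥ (M *ᵥ x) = star cv ⬝ᵥ x := by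
  rw [star_mulVec, hM.isHermitian.inv.eq, ← dotProduct_mulVec, mulVec_mulVec,
    Matrix.nonsing_inv_mul _ ((Matrix.isUnit_iff_isUnit_det _).mp hM.isUnit), one_mulVec]

/-- Completing the square: `2 Re(xᴴ c) − Re(xᴴ M x) ≤ Re(cᴴ M⁻¹ c)`. -/
lemma aux_key_s8 {M : Matrix m m ℂ} (hM : M.PosDef) (cv x : m → ℂ) :
    2 * (star x ⬝ᵥ cv).re - (star x ⬝ᵥ (M *ᵥ x)).re ≤ (star cv ⬝ᵥ (M⁻¹ *ᵥ cv)).re := by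
  set u := M⁻¹ *ᵥ cv with hu
  have h0 : 0 ≤ (star (x - u) ⬝ᵥ (M *ᵥ (x - u))).re :=
    (Complex.le_def.mp ((posSemidef_iff_dotProduct_mulVec.mp hM.posSemidef).2 (x - u))).1
  have h1 : M *ᵥ (x - u) = M *ᵥ x - cv := by rw [mulVec_sub, aux_mul_inv_cancel hM]
  have hexp : (star (x - u) ⬝ᵥ (M *ᵥ (x - u))).re =
      (star x ⬝ᵥ (M *ᵥ x)).re - 2 * (star x ⬝ᵥ cv).re + (star cv ⬝ᵥ u).re := by
    rw [h1, star_sub, sub_dotProduct, dotProduct_sub, dotProduct_sub, aux_inv_dot hM]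
    have e1 : (star cv ⬝ᵥ x).re = (star x ⬝ᵥ cv).re := aux_star_dot_re cv x
    have e2 : (star u ⬝ᵥ cv).re = (star cv ⬝ᵥ u).re := aux_star_dot_re u cv
    simp only [Complex.sub_re]
    linarith
  linarith [hexp ▸ h0]

/-- Equality at the optimum. -/
lemma aux_key_eq {M : Matrix m m ℂ} (hM : M.PosDef) (cv : m → ℂ) :
    2 * (star (M⁻¹ *ᵥ cv) ⬝ᵥ cv).re - (star (M⁻¹ *ᵥ cv) ⬝ᵥ (M *ᵥ (M⁻¹ *ᵥ cv))).re
      = (star cv ⬝ᵥ (M⁻¹ *ᵥ cv)).re := by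
  rw [aux_inv_dot hM, aux_star_dot_re (M⁻¹ *ᵥ cv) cv]
  ring

/-- Monotone quadratic forms give antitone `Re(cᴴ M⁻¹ c)`. -/
lemma aux_inv_mono {M M' : Matrix m m ℂ} (hM : M.PosDef) (hM' : M'.PosDef)
    (h : ∀ x, (star x ⬝ᵥ (M *ᵥ x)).re ≤ (star x ⬝ᵥ (M' *ᵥ x)).re) (cv : m → ℂ) :
    (star cv ⬝ᵥ (M'⁻¹ *ᵥ cv)).re ≤ (star cv ⬝ᵥ (M⁻¹ *ᵥ cv)).re := by
  set x := M'⁻¹ *ᵥ cv with hx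
  have e := aux_key_eq hM' cv
  have k := aux_key_s8 hM cv x
  have hq := h x
  linarith

end Aux

/-- the interference function
`I(q) = γ / (p_l · c_lᴴ (∑_{n≠l} q n p n • c_n c_nᴴ + D)⁻¹ c_l)`
is a standard interference function: positive, monotone and scalable. -/
theorem stmt_8 (N L : ℕ) (hN : 0 < N) (hL : 0 < L)
    (c : Fin L → (Fin N → ℂ)) (hc : ∀ n, c n ≠ 0) (l : Fin L)
    (p : Fin L → ℝ) (hp : ∀ n, 0 < p n)
    (γ : ℝ) (hγ : 0 < γ)
    (D : Matrix (Fin N) (Fin N) ℂ) (hD : D.PosDef)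
    (A : (Fin L → ℝ) → Matrix (Fin N) (Fin N) ℂ)
    (hA : ∀ q, A q =
      (∑ n ∈ Finset.univ.erase l, (q n * p n) • vecMulVec (c n) (star (c n))) + D)
    (I : (Fin L → ℝ) → ℝ)
    (hI : ∀ q, I q = γ / (p l * (star (c l) ⬝ᵥ ((A q)⁻¹ *ᵥ c l)).re)) :
    -- positivity
    (∀ q : Fin L → ℝ, (∀ n, 0 ≤ q n) → 0 < I q) ∧
    -- monotonicity
    (∀ q q' : Fin L → ℝ, (∀ n, 0 ≤ q n) → (∀ n, q n ≤ q' n) → I q ≤ I q') ∧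
    -- scalability
    (∀ q : Fin L → ℝ, (∀ n, 0 ≤ q n) → ∀ α : ℝ, 1 < α → I (α • q) < α * I q) := by
  -- the quadratic scalar
  set f : (Fin L → ℝ) → ℝ := fun q => (star (c l) ⬝ᵥ ((A q)⁻¹ *ᵥ c l)).re with hf
  -- A q is positive definite for nonnegative q
  have hApos : ∀ q : Fin L → ℝ, (∀ n, 0 ≤ q n) → (A q).PosDef := by
    intro q hq
    rw [hA]
    refine Matrix.PosDef.posSemidef_add ?_ hD
    refine Finset.sum_induction _ Matrix.PosSemidef
      (fun a b ha hb => ha.add hb) Matrix.PosSemidef.zero ?_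
    intro n _
    exact aux_psd_term _ (mul_nonneg (hq n) (hp n).le) (c n)
  -- f is positive for nonnegative q
  have hfpos : ∀ q : Fin L → ℝ, (∀ n, 0 ≤ q n) → 0 < f q := by
    intro q hq
    exact (Complex.lt_def.mp ((posDef_iff_dotProduct_mulVec.mp (hApos q hq).inv).2 (hc l))).1
  -- quadratic forms are monotone in q
  have hquad : ∀ q q' : Fin L → ℝ, (∀ n, q n ≤ q' n) → ∀ x : Fin N → ℂ,
      (star x ⬝ᵥ (A q *ᵥ x)).re ≤ (star x ⬝ᵥ (A q' *ᵥ x)).re := by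
    intro q q' hle x
    have hdiff : A q' - A q = ∑ n ∈ Finset.univ.erase l,
        ((q' n - q n) * p n) • vecMulVec (c n) (star (c n)) := by
      rw [hA q', hA q, add_sub_add_right_eq_sub, ← Finset.sum_sub_distrib]
      refine Finset.sum_congr rfl fun n _ => ?_
      rw [← sub_smul, ← sub_mul]
    have hpsd : (A q' - A q).PosSemidef := by
      rw [hdiff]
      refine Finset.sum_induction _ Matrix.PosSemidef
        (fun a b ha hb => ha.add hb) Matrix.PosSemidef.zero ?_
      intro n _
      exact aux_psd_term _ (mul_nonneg (sub_nonneg.mpr (hle n)) (hp n).le) (c n)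
    have h0 : 0 ≤ (star x ⬝ᵥ ((A q' - A q) *ᵥ x)).re := (Complex.le_def.mp ((posSemidef_iff_dotProduct_mulVec.mp hpsd).2 x)).1
    rw [sub_mulVec, dotProduct_sub, Complex.sub_re] at h0
    linarith
  refine ⟨?_, ?_, ?_⟩
  · -- positivity
    intro q hq
    rw [hI]
    exact div_pos hγ (mul_pos (hp l) (hfpos q hq))
  · -- monotonicity
    intro q q' hq hle
    have hq' : ∀ n, 0 ≤ q' n := fun n => (hq n).trans (hle n)
    have hmono : f q' ≤ f q :=
      aux_inv_mono (hApos q hq) (hApos q' hq') (hquad q q' hle) (c l)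
    rw [hI, hI]
    exact div_le_div_of_nonneg_left hγ.le (mul_pos (hp l) (hfpos q' hq'))
      (mul_le_mul_of_nonneg_left hmono (hp l).le)
  · -- scalability
    intro q hq α hα
    have hα0 : (0:ℝ) < α := lt_trans one_pos hα
    have hαq : ∀ n, 0 ≤ (α • q) n := fun n => mul_nonneg hα0.le (hq n)
    set M := A q with hM
    have hMpos : M.PosDef := hApos q hq
    have hM'pos : (A (α • q)).PosDef := hApos _ hαq
    set u : Fin N → ℂ := M⁻¹ *ᵥ c l with hu
    have hMu : M *ᵥ u = c l := aux_mul_inv_cancel hMpos (c l)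
    have hune : u ≠ 0 := by
      intro h0
      apply hc l
      rw [← hMu, h0, mulVec_zero]
    set x : Fin N → ℂ := α⁻¹ • u with hx
    have hxne : x ≠ 0 := smul_ne_zero (inv_ne_zero hα0.ne') hune
    -- A(αq) = α • M - (α-1) • D
    have hAα : A (α • q) = α • M - (α - 1) • D := by
      rw [hM, hA (α • q), hA q, smul_add, smul_sum]
      have : ∀ n ∈ Finset.univ.erase l,
          ((α • q) n * p n) • vecMulVec (c n) (star (c n))
            = α • ((q n * p n) • vecMulVec (c n) (star (c n))) := by
        intro n _
        rw [smul_smul]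
        congr 1
        simp [mul_assoc]
      rw [Finset.sum_congr rfl this]
      ext i j
      simp [sub_smul]
      ring
    -- star x = α⁻¹ • star u
    have hsx : star x = (α⁻¹ : ℝ) • star u := by
      rw [hx, star_smul, star_trivial]
    -- Re(xᴴ c l)
    have hR : (star u ⬝ᵥ c l).re = f q := aux_star_dot_re u (c l)
    have hxc : (star x ⬝ᵥ c l).re = α⁻¹ * f q := by
      rw [hsx, smul_dotProduct, Complex.smul_re, hR, smul_eq_mul]
    -- M *ᵥ x
    have hMx : M *ᵥ x = (α⁻¹ : ℝ) • c l := by rw [hx, mulVec_smul, hMu]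
    have hxMx : (star x ⬝ᵥ (M *ᵥ x)).re = α⁻¹ * (α⁻¹ * f q) := by
      rw [hMx, hsx, smul_dotProduct, dotProduct_smul, Complex.smul_re, Complex.smul_re,
        hR, smul_eq_mul, smul_eq_mul]
    -- Re(xᴴ D x) > 0
    have hxDx : 0 < (star x ⬝ᵥ (D *ᵥ x)).re := (Complex.lt_def.mp ((posDef_iff_dotProduct_mulVec.mp hD).2 hxne)).1
    -- quadratic form of A(αq) at x
    have hform : (star x ⬝ᵥ (A (α • q) *ᵥ x)).re
        = α * (α⁻¹ * (α⁻¹ * f q)) - (α - 1) * (star x ⬝ᵥ (D *ᵥ x)).re := by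
      rw [hAα, sub_mulVec, dotProduct_sub, Complex.sub_re, smul_mulVec,
        smul_mulVec, dotProduct_smul, dotProduct_smul, Complex.smul_re,
        Complex.smul_re, hxMx, smul_eq_mul, smul_eq_mul]
    -- the key inequality
    have hkey := aux_key_s8 hM'pos (c l) x
    have hsimp : α * (α⁻¹ * (α⁻¹ * f q)) = α⁻¹ * f q := by
      field_simp
    have hflt : α⁻¹ * f q < f (α • q) := by
      have : 2 * (α⁻¹ * f q) - (α⁻¹ * f q - (α - 1) * (star x ⬝ᵥ (D *ᵥ x)).re)
          ≤ f (α • q) := by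
        rw [hf]
        calc 2 * (α⁻¹ * f q) - (α⁻¹ * f q - (α - 1) * (star x ⬝ᵥ (D *ᵥ x)).re)
            = 2 * (star x ⬝ᵥ c l).re - (star x ⬝ᵥ (A (α • q) *ᵥ x)).re := by
              rw [hxc, hform, hsimp]
          _ ≤ _ := hkey
      nlinarith [mul_pos (sub_pos.mpr hα) hxDx]
    have hfq : 0 < f q := hfpos q hq
    have hstep : 0 < α⁻¹ * f q := mul_pos (inv_pos.mpr hα0) hfq
    rw [hI, hI]
    calc γ / (p l * f (α • q))
        < γ / (p l * (α⁻¹ * f q)) :=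
          div_lt_div_of_pos_left hγ (mul_pos (hp l) hstep)
            (mul_lt_mul_of_pos_left hflt (hp l))
      _ = α * (γ / (p l * f q)) := by
          field_simp
end

section
/- Let I: ℝ_{≥0}^m → ℝ_{>0}^m be a standard interference function (positive, monotone, and scalable: α I(q) > I(αq) componentwise for all α > 1), and let F(q) = min{Q_max·1, I(q)} componentwise with Q_max > 0. Then F is also positive, monotone, and scalable, and the iteration q^{(n+1)} = F(q^{(n)}) starting from q^{(0)} = Q_max·1 produces a componentwise nonincreasing sequence that converges. -/
open Filter

/-- if `I` is a standard interference function (positive, monotone,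
scalable) and `F q = min (Q_max • 1) (I q)` componentwise with `Q_max > 0`, then `F`
is positive, monotone and scalable, and the iteration `q^{(n+1)} = F (q^{(n)})`
started from `q^{(0)} = Q_max • 1` is componentwise nonincreasing and converges. -/
theorem stmt_9 (m : ℕ) (hm : 0 < m) (Qmax : ℝ) (hQ : 0 < Qmax)
    (I : (Fin m → ℝ) → (Fin m → ℝ))
    (hpos : ∀ q, (∀ i, 0 ≤ q i) → ∀ i, 0 < I q i)
    (hmono : ∀ q q', (∀ i, 0 ≤ q i) → (∀ i, q i ≤ q' i) → ∀ i, I q i ≤ I q' i)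
    (hscal : ∀ q, (∀ i, 0 ≤ q i) → ∀ α : ℝ, 1 < α → ∀ i, I (α • q) i < α * I q i)
    (F : (Fin m → ℝ) → (Fin m → ℝ))
    (hF : ∀ q i, F q i = min Qmax (I q i))
    (qseq : ℕ → (Fin m → ℝ))
    (hq0 : ∀ i, qseq 0 i = Qmax)
    (hqs : ∀ n, qseq (n + 1) = F (qseq n)) :
    -- F is positive
    (∀ q, (∀ i, 0 ≤ q i) → ∀ i, 0 < F q i) ∧
    -- F is monotone
    (∀ q q', (∀ i, 0 ≤ q i) → (∀ i, q i ≤ q' i) → ∀ i, F q i ≤ F q' i) ∧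
    -- F is scalable
    (∀ q, (∀ i, 0 ≤ q i) → ∀ α : ℝ, 1 < α → ∀ i, F (α • q) i < α * F q i) ∧
    -- the iterates are componentwise nonincreasing
    (∀ n i, qseq (n + 1) i ≤ qseq n i) ∧
    -- and converge
    (∃ qlim : Fin m → ℝ, ∀ i, Tendsto (fun n => qseq n i) atTop (nhds (qlim i))) := by

  have hFpos : ∀ q, (∀ i, 0 ≤ q i) → ∀ i, 0 < F q i := by
    intro q hq i
    rw [hF]
    exact lt_min hQ (hpos q hq i)
  have hFmono : ∀ q q', (∀ i, 0 ≤ q i) → (∀ i, q i ≤ q' i) → ∀ i, F q i ≤ F q' i := by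
    intro q q' hq hle i
    rw [hF, hF]
    exact min_le_min le_rfl (hmono q q' hq hle i)
  have hFscal : ∀ q, (∀ i, 0 ≤ q i) → ∀ α : ℝ, 1 < α → ∀ i, F (α • q) i < α * F q i := by
    intro q hq α hα i
    have hα0 : (0:ℝ) < α := lt_trans one_pos hα
    rw [hF, hF, mul_min_of_nonneg _ _ hα0.le]
    refine lt_min ?_ ?_
    · exact lt_of_le_of_lt (min_le_left _ _) (by nlinarith)
    · exact lt_of_le_of_lt (min_le_right _ _) (hscal q hq α hα i)
  have hnn : ∀ n i, 0 ≤ qseq n i := by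
    intro n
    induction n with
    | zero => intro i; rw [hq0]; exact hQ.le
    | succ k ih => intro i; rw [hqs]; exact (hFpos _ ih i).le
  have hdec : ∀ n i, qseq (n + 1) i ≤ qseq n i := by
    intro n
    induction n with
    | zero =>
      intro i
      rw [hqs, hF, hq0]
      exact min_le_left _ _
    | succ k ih =>
      intro i
      rw [hqs (k+1)]
      nth_rewrite 2 [hqs k]
      exact hFmono _ _ (hnn (k+1)) ih i
  refine ⟨hFpos, hFmono, hFscal, hdec, fun i => ⨅ n, qseq n i, fun i => ?_⟩
  have hanti : Antitone (fun n => qseq n i) :=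
    antitone_nat_of_succ_le (fun n => hdec n i)
  exact tendsto_atTop_ciInf hanti ⟨0, fun x ⟨n, hn⟩ => hn ▸ hnn n i⟩
end

section
/- If a standard interference function F (positive, monotone, scalable) has a fixed point q* with F(q*) = q*, then q* is the unique fixed point, and for any feasible q with q ≥ F(q) we have q ≥ q* componentwise (i.e., the fixed point minimizes each power among all feasible vectors). -/
lemma yates_key (m : ℕ) (hm : 0 < m)
    (F : (Fin m → ℝ) → (Fin m → ℝ))
    (hmono : ∀ q q', (∀ i, 0 ≤ q i) → (∀ i, q i ≤ q' i) → ∀ i, F q i ≤ F q' i)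
    (hscal : ∀ q, (∀ i, 0 ≤ q i) → ∀ α : ℝ, 1 < α → ∀ i, F (α • q) i < α * F q i)
    (p : Fin m → ℝ) (hp : ∀ i, 0 ≤ p i) (hpfix : F p = p)
    (q : Fin m → ℝ) (hq : ∀ i, 0 ≤ q i) (hqpos : ∀ i, 0 < q i)
    (hfeas : ∀ i, F q i ≤ q i) : ∀ i, p i ≤ q i := by
  obtain ⟨i0, -, hi0⟩ := Finset.exists_max_image Finset.univ (fun i => p i / q i)
    (Finset.univ_nonempty_iff.mpr ⟨⟨0, hm⟩⟩)
  set β := p i0 / q i0 with hβ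
  have hle : ∀ i, p i ≤ β * q i := by
    intro i
    have h := hi0 i (Finset.mem_univ i)
    calc p i = (p i / q i) * q i := (div_mul_cancel₀ _ (hqpos i).ne').symm
    _ ≤ β * q i := by
        exact mul_le_mul_of_nonneg_right h (hq i)
  by_cases hβ1 : β ≤ 1
  · intro i
    calc p i ≤ β * q i := hle i
    _ ≤ 1 * q i := mul_le_mul_of_nonneg_right hβ1 (hq i)
    _ = q i := one_mul _
  · push_neg at hβ1
    exfalso
    have h1 : p i0 = β * q i0 := by
      rw [hβ, div_mul_cancel₀ _ (hqpos i0).ne']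
    have h2 : p i0 < p i0 := by
      calc p i0 = F p i0 := by rw [hpfix]
      _ ≤ F (β • q) i0 := hmono p (β • q) hp (fun i => by simpa using hle i) i0
      _ < β * F q i0 := hscal q hq β hβ1 i0
      _ ≤ β * q i0 := mul_le_mul_of_nonneg_left (hfeas i0) (by linarith)
      _ = p i0 := h1.symm
    exact lt_irrefl _ h2

/-- Yates: a standard interference function `F` (positive, monotone,
scalable) has at most one fixed point, and any fixed point `q*` satisfies
`q* ≤ q` componentwise for every feasible `q` (i.e. every `q ≥ F q ≥ 0`). -/
theorem stmt_10 (m : ℕ) (hm : 0 < m)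
    (F : (Fin m → ℝ) → (Fin m → ℝ))
    (hpos : ∀ q, (∀ i, 0 ≤ q i) → ∀ i, 0 < F q i)
    (hmono : ∀ q q', (∀ i, 0 ≤ q i) → (∀ i, q i ≤ q' i) → ∀ i, F q i ≤ F q' i)
    (hscal : ∀ q, (∀ i, 0 ≤ q i) → ∀ α : ℝ, 1 < α → ∀ i, F (α • q) i < α * F q i)
    (qstar : Fin m → ℝ) (hqstar_nonneg : ∀ i, 0 ≤ qstar i)
    (hfix : F qstar = qstar) :
    -- uniqueness of the fixed point
    (∀ q : Fin m → ℝ, (∀ i, 0 ≤ q i) → F q = q → q = qstar) ∧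
    -- minimality among feasible vectors
    (∀ q : Fin m → ℝ, (∀ i, 0 ≤ q i) → (∀ i, F q i ≤ q i) → ∀ i, qstar i ≤ q i) := by
  have hqstar_pos : ∀ i, 0 < qstar i := fun i => hfix ▸ hpos qstar hqstar_nonneg i
  have key : ∀ q : Fin m → ℝ, (∀ i, 0 ≤ q i) → (∀ i, F q i ≤ q i) → ∀ i, qstar i ≤ q i := by
    intro q hq hfeas
    have hqpos : ∀ i, 0 < q i := fun i => lt_of_lt_of_le (hpos q hq i) (hfeas i)
    exact yates_key m hm F hmono hscal qstar hqstar_nonneg hfix q hq hqpos hfeas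
  refine ⟨fun q hq hqfix => ?_, key⟩
  have hqpos : ∀ i, 0 < q i := fun i => hqfix ▸ hpos q hq i
  have h1 : ∀ i, qstar i ≤ q i := key q hq (fun i => le_of_eq (congrFun hqfix i))
  have h2 : ∀ i, q i ≤ qstar i :=
    yates_key m hm F hmono hscal q hq hqfix qstar hqstar_nonneg hqstar_pos
      (fun i => le_of_eq (congrFun hfix i))
  funext i
  exact le_antisymm (h2 i) (h1 i)
end
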